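/- Let K be a compact metric space and F : K → ℝ the pointwise limit of continuous functions (gₙ) on K such that K_n(G,(δᵢ)) ≠ ∅ for some positive reals δ₁,…,δₙ, where K₀(G,(δᵢ)) = K and K_{i+1}(G,(δⱼ)) = {k ∈ K_i : osc_{K_i}(G,k) ≥ δ_{i+1}}. Then for every sequence (gₙ)ₙ₌₀^∞ ⊆ C(K) with g₀ ≡ 0 converging pointwise to G, sup_{k∈K} Σₙ |g_{n+1}(k) − gₙ(k)| ≥ (1/4) Σᵢ₌₁ⁿ δᵢ. -/

import Mathlib

open Filter

/-- The oscillation of `F` restricted to `L` at `x` is at least `δ`. -/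
def oscGE {K : Type*} [TopologicalSpace K] (F : K → ℝ) (L : Set K) (x : K) (δ : ℝ) : Prop :=
  ∀ U ∈ nhds x, ∀ η < δ, ∃ y ∈ L ∩ U, ∃ z ∈ L ∩ U, η < F y - F z

/-- Derived sets with varying thresholds: `K₀ = K`,
`K_{i+1}(F,(δⱼ)) = {k ∈ K_i : osc_{K_i}(F,k) ≥ δ_{i+1}}`. -/
def oscDerivedSetSeq {K : Type*} [TopologicalSpace K] (F : K → ℝ) (δ : ℕ → ℝ) : ℕ → Set K
  | 0 => Set.univ
  | n + 1 => {x ∈ oscDerivedSetSeq F δ n | oscGE F (oscDerivedSetSeq F δ n) x (δ (n + 1))}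

lemma stmt7_aux {K : Type*} [MetricSpace K] (G : K → ℝ)
    (δ : ℕ → ℝ) (g : ℕ → K → ℝ) (hg : ∀ m, Continuous (g m))
    (hlim : ∀ k, Tendsto (fun m => g m k) atTop (nhds (G k))) :
    ∀ j : ℕ, ∀ x ∈ oscDerivedSetSeq G δ j, ∀ M : ℕ, ∀ ε > (0:ℝ),
      ∃ k N, (∑ m ∈ Finset.range M, |g (m+1) x - g m x|)
        + (1/2) * ∑ i ∈ Finset.range j, δ (i+1) - ε
        ≤ ∑ m ∈ Finset.range N, |g (m+1) k - g m k| := by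
  intro j
  induction j with
  | zero =>
    intro x _ M ε hε
    exact ⟨x, M, by simp; linarith⟩
  | succ j ih =>
    intro x hx M ε hε
    have hx' : x ∈ oscDerivedSetSeq G δ j ∧
        oscGE G (oscDerivedSetSeq G δ j) x (δ (j+1)) := hx
    obtain ⟨hx1, hx2⟩ := hx'
    set η : ℝ := ε / 7 with hηdef
    have hη : 0 < η := by positivity
    set φ : K → ℝ := fun u => ∑ m ∈ Finset.range M, |g (m+1) u - g m u| with hφdef
    have hφc : Continuous φ := by
      apply continuous_finset_sum
      intro m _
      exact ((hg (m+1)).sub (hg m)).abs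
    have h1 : ∀ᶠ u in nhds x, dist (φ u) (φ x) < η :=
      Metric.tendsto_nhds.mp (hφc.tendsto x) η hη
    have h2 : ∀ᶠ u in nhds x, dist (g M u) (g M x) < η :=
      Metric.tendsto_nhds.mp ((hg M).tendsto x) η hη
    obtain ⟨y, ⟨hyL, hyU⟩, z, ⟨hzL, hzU⟩, hyz⟩ :=
      hx2 _ (h1.and h2) (δ (j+1) - η) (by linarith)
    simp only [Set.mem_setOf_eq, Real.dist_eq] at hyU hzU
    obtain ⟨hy1, hy2⟩ := hyU
    obtain ⟨hz1, hz2⟩ := hzU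
    rw [abs_lt] at hy1 hy2 hz1 hz2
    -- pick a witness w among y, z with a big gap |G w - g M w|
    obtain ⟨w, hwL, hwφ, hwgap⟩ :
        ∃ w, w ∈ oscDerivedSetSeq G δ j ∧ φ x - η < φ w ∧
          (δ (j+1) - 3*η)/2 ≤ |G w - g M w| := by
      rcases le_or_gt ((δ (j+1) - 3*η)/2) (G y - g M y) with hc | hc
      · exact ⟨y, hyL, by linarith [hy1.1], le_trans hc (le_abs_self _)⟩
      · refine ⟨z, hzL, by linarith [hz1.1], ?_⟩
        have : (δ (j+1) - 3*η)/2 ≤ g M z - G z := by linarith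
        calc (δ (j+1) - 3*η)/2 ≤ g M z - G z := this
          _ ≤ |g M z - G z| := le_abs_self _
          _ = |G z - g M z| := abs_sub_comm _ _
    -- pick a far stage N where g N w approximates G w
    obtain ⟨N₀, hN₀⟩ := Metric.tendsto_atTop.mp (hlim w) η hη
    set N := max M N₀ with hNdef
    have hMN : M ≤ N := le_max_left _ _
    have hNw : |g N w - G w| < η := by
      have := hN₀ N (le_max_right _ _)
      rwa [Real.dist_eq] at this
    have htel : |g N w - g M w| ≤ ∑ m ∈ Finset.Ico M N, |g (m+1) w - g m w| := by
      have : g N w - g M w = ∑ m ∈ Finset.Ico M N, (g (m+1) w - g m w) := by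
        rw [Finset.sum_Ico_eq_sub _ hMN, Finset.sum_range_sub (fun i => g i w), Finset.sum_range_sub (fun i => g i w)]
        ring
      rw [this]
      exact Finset.abs_sum_le_sum_abs _ _
    have hsplit : φ w + ∑ m ∈ Finset.Ico M N, |g (m+1) w - g m w|
        = ∑ m ∈ Finset.range N, |g (m+1) w - g m w| :=
      Finset.sum_range_add_sum_Ico _ hMN
    have hgain : |G w - g M w| - η ≤ |g N w - g M w| := by
      have htri : |G w - g M w| ≤ |G w - g N w| + |g N w - g M w| := abs_sub_le _ _ _
      have : |G w - g N w| = |g N w - G w| := abs_sub_comm _ _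
      linarith
    have hstep : φ x + (δ (j+1)/2 - (7/2)*η)
        ≤ ∑ m ∈ Finset.range N, |g (m+1) w - g m w| := by
      rw [← hsplit]
      have := le_trans hgain htel
      linarith
    obtain ⟨k, N', hk⟩ := ih w hwL N (ε/2) (by linarith)
    refine ⟨k, N', ?_⟩
    rw [Finset.sum_range_succ]
    have h72 : (7/2) * η = ε/2 := by rw [hηdef]; ring
    calc φ x + (1/2) * (∑ i ∈ Finset.range j, δ (i+1) + δ (j+1+1-1+1-1)) - ε
        ≤ (∑ m ∈ Finset.range N, |g (m+1) w - g m w|)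
          + (1/2) * ∑ i ∈ Finset.range j, δ (i+1) - ε/2 := by
          simp only [Nat.add_sub_cancel]
          linarith
      _ ≤ _ := hk

/-- If `K_n(G,(δᵢ)) ≠ ∅` for positive reals `δ₁,…,δₙ`, then for every
`(gₙ) ⊆ C(K)` with `g₀ ≡ 0` converging pointwise to `G`,
`sup_k Σₙ |g_{n+1}(k) − gₙ(k)| ≥ (1/4) Σᵢ₌₁ⁿ δᵢ`. -/
theorem stmt7 {K : Type*} [MetricSpace K] [CompactSpace K] (G : K → ℝ)
    (δ : ℕ → ℝ) (hδ : ∀ i, 0 < δ i) (n : ℕ)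
    (hne : (oscDerivedSetSeq G δ n).Nonempty)
    (g : ℕ → K → ℝ) (hg : ∀ m, Continuous (g m)) (hg0 : g 0 = 0)
    (hlim : ∀ k, Tendsto (fun m => g m k) atTop (nhds (G k))) :
    ∀ C : ℝ, (∀ (k : K) (N : ℕ), ∑ m ∈ Finset.range N, |g (m+1) k - g m k| ≤ C) →
      (1 / 4) * ∑ i ∈ Finset.range n, δ (i + 1) ≤ C := by
  intro C hC
  obtain ⟨x, hx⟩ := hne
  have hhalf : (1/2) * ∑ i ∈ Finset.range n, δ (i+1) ≤ C := by
    apply le_of_forall_sub_le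
    intro ε hε
    obtain ⟨k, N, hk⟩ := stmt7_aux G δ g hg hlim n x hx 0 ε hε
    simp only [Finset.range_zero, Finset.sum_empty, zero_add] at hk
    exact le_trans hk (hC k N)
  have hS : 0 ≤ ∑ i ∈ Finset.range n, δ (i+1) :=
    Finset.sum_nonneg fun i _ => (hδ (i+1)).le
  linarith
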